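/- arXiv:1911.10845 — 8 statements merged into one kernel-verified Lean document; each statement's English description precedes it below -/
import Mathlib

section
/- Let P, Q, U : R → R^N be differentiable and D be a real symmetric N×N matrix. If P' = (1/2) D Q + U·Q and Q' = -(1/2) D P - U·P (where · denotes entrywise multiplication of vectors), then ‖P(t)‖² + ‖Q(t)‖² is constant in t. -/
/-- If `P' = (1/2) D Q + U·Q` and `Q' = -(1/2) D P - U·P` with `D` real symmetric and
`·` the entrywise product, then `‖P(t)‖² + ‖Q(t)‖²` is constant in `t`. -/
theorem mass_conserved_semidiscrete {N : ℕ}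
    (D : Matrix (Fin N) (Fin N) ℝ) (hD : D.transpose = D)
    (P Q U : ℝ → EuclideanSpace ℝ (Fin N))
    (hP : ∀ t, HasDerivAt P
      (WithLp.toLp 2 ((1/2 : ℝ) • D.mulVec (Q t) + fun i => U t i * Q t i : Fin N → ℝ) :
        EuclideanSpace ℝ (Fin N)) t)
    (hQ : ∀ t, HasDerivAt Q
      (WithLp.toLp 2 (-((1/2 : ℝ) • D.mulVec (P t)) - fun i => U t i * P t i : Fin N → ℝ) :
        EuclideanSpace ℝ (Fin N)) t) :
    ∀ t s : ℝ, ‖P t‖ ^ 2 + ‖Q t‖ ^ 2 = ‖P s‖ ^ 2 + ‖Q s‖ ^ 2 := by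
  have hDsym : ∀ i j, D i j = D j i := by
    intro i j
    conv_lhs => rw [← hD]
    rfl
  have hA : ∀ x y : Fin N → ℝ,
      ∑ i, D.mulVec x i * y i = ∑ i, D.mulVec y i * x i := by
    intro x y
    simp only [Matrix.mulVec, dotProduct]
    simp_rw [Finset.sum_mul]
    rw [Finset.sum_comm]
    exact Finset.sum_congr rfl fun i _ => Finset.sum_congr rfl fun j _ => by
      rw [hDsym]; ring
  have key : ∀ t, HasDerivAt (fun t => ‖P t‖ ^ 2 + ‖Q t‖ ^ 2) 0 t := by
    intro t
    set P' : EuclideanSpace ℝ (Fin N) :=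
      (WithLp.toLp 2 ((1/2 : ℝ) • D.mulVec (Q t) + fun i => U t i * Q t i : Fin N → ℝ)) with hP'def
    set Q' : EuclideanSpace ℝ (Fin N) :=
      (WithLp.toLp 2 (-((1/2 : ℝ) • D.mulVec (P t)) - fun i => U t i * P t i : Fin N → ℝ)) with hQ'def
    have h1 : HasDerivAt (fun t => (inner ℝ (P t) (P t) : ℝ))
        (inner ℝ (P t) P' + inner ℝ P' (P t)) t := (hP t).inner ℝ (hP t)
    have h2 : HasDerivAt (fun t => (inner ℝ (Q t) (Q t) : ℝ))
        (inner ℝ (Q t) Q' + inner ℝ Q' (Q t)) t := (hQ t).inner ℝ (hQ t)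
    have hsum := h1.add h2
    have core : (inner ℝ P' (P t) : ℝ) + inner ℝ Q' (Q t) = 0 := by
      have eD := hA (fun j => Q t j) (fun j => P t j)
      have eU : ∑ i, U t i * (Q t i * P t i) = ∑ i, U t i * (P t i * Q t i) :=
        Finset.sum_congr rfl fun i _ => by ring
      simp only [hP'def, hQ'def, PiLp.inner_apply, RCLike.inner_apply, conj_trivial, PiLp.toLp_apply,
        PiLp.add_apply, PiLp.sub_apply, PiLp.neg_apply, PiLp.smul_apply, smul_eq_mul]
      simp only [fun x b => mul_comm ((P t).ofLp x) b, fun x b => mul_comm ((Q t).ofLp x) b]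
      simp only [Pi.add_apply, Pi.sub_apply, Pi.neg_apply, Pi.smul_apply, smul_eq_mul,
        add_mul, sub_mul, neg_mul, mul_assoc, Finset.sum_add_distrib, Finset.sum_sub_distrib,
        ← Finset.mul_sum]
      rw [eD, eU]
      simp_rw [show ∀ a b : ℝ, -(1/2 * (a * b)) = a * b * (-(1/2)) from fun a b => by ring,
        ← Finset.sum_mul]
      ring
    have hzero : (inner ℝ (P t) P' + inner ℝ P' (P t)) + (inner ℝ (Q t) Q' + inner ℝ Q' (Q t))
        = (0 : ℝ) := by
      linarith [core, real_inner_comm (P t) P', real_inner_comm (Q t) Q']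
    have heq : (fun t => ‖P t‖ ^ 2 + ‖Q t‖ ^ 2)
        = (fun t => (inner ℝ (P t) (P t) : ℝ) + (inner ℝ (Q t) (Q t) : ℝ)) := by
      funext u
      rw [real_inner_self_eq_norm_sq, real_inner_self_eq_norm_sq]
    rw [heq, ← hzero]
    exact hsum
  intro t s
  exact is_const_of_deriv_eq_zero
    (fun x => (key x).differentiableAt) (fun x => (key x).deriv) t s
end

section
/- Let D^α and D^β be real symmetric N×N matrices and let U, V, P, Q : R → R^N be differentiable curves satisfying U' = 2V, V' = (1/2)(D^β U - U + P·P + Q·Q), P' = (1/2) D^α Q + U·Q, Q' = -(1/2) D^α P - U·P, where · denotes entrywise multiplication. Then the discrete energy H = (1/4)( -P^T D^α P - Q^T D^α Q - U^T D^β U + U^T U + 4 V^T V - 2 U^T(P·P + Q·Q) ) is constant in time. -/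
section aux

variable {N : ℕ}

lemma aux_symmSwap {D : Matrix (Fin N) (Fin N) ℝ} (hD : D.transpose = D)
    (x y : Fin N → ℝ) :
    dotProduct x (D.mulVec y) = dotProduct y (D.mulVec x) := by
  rw [Matrix.dotProduct_mulVec, ← Matrix.mulVec_transpose, hD, dotProduct_comm]

lemma aux_dotDeriv {f g : ℝ → Fin N → ℝ} {f' g' : Fin N → ℝ} {t : ℝ}
    (hf : HasDerivAt f f' t) (hg : HasDerivAt g g' t) :
    HasDerivAt (fun τ => dotProduct (f τ) (g τ))
      (dotProduct f' (g t) + dotProduct (f t) g') t := by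
  have h : ∀ i ∈ Finset.univ, HasDerivAt (fun τ => f τ i * g τ i)
      (f' i * g t i + f t i * g' i) t :=
    fun i _ => (hasDerivAt_pi.mp hf i).mul (hasDerivAt_pi.mp hg i)
  have hs := HasDerivAt.fun_sum h
  simpa [dotProduct, Finset.sum_add_distrib] using hs

lemma aux_mulVecDeriv (D : Matrix (Fin N) (Fin N) ℝ) {f : ℝ → Fin N → ℝ}
    {f' : Fin N → ℝ} {t : ℝ} (hf : HasDerivAt f f' t) :
    HasDerivAt (fun τ => D.mulVec (f τ)) (D.mulVec f') t := by
  rw [hasDerivAt_pi] at hf ⊢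
  intro i
  simp only [Matrix.mulVec, dotProduct]
  exact HasDerivAt.fun_sum fun j _ => (hf j).const_mul (D i j)

lemma aux_hadDeriv {f g : ℝ → Fin N → ℝ} {f' g' : Fin N → ℝ} {t : ℝ}
    (hf : HasDerivAt f f' t) (hg : HasDerivAt g g' t) :
    HasDerivAt (fun τ => fun i => f τ i * g τ i)
      (fun i => f' i * g t i + f t i * g' i) t :=
  hasDerivAt_pi.mpr fun i => (hasDerivAt_pi.mp hf i).mul (hasDerivAt_pi.mp hg i)

end aux

/-- For the semi-discrete system `U' = 2V`, `V' = (1/2)(DᵝU - U + P·P + Q·Q)`,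
`P' = (1/2)DᵅQ + U·Q`, `Q' = -(1/2)DᵅP - U·P` with `Dᵅ, Dᵝ` symmetric, the discrete
energy `H = (1/4)(-PᵀDᵅP - QᵀDᵅQ - UᵀDᵝU + UᵀU + 4VᵀV - 2Uᵀ(P·P + Q·Q))` is constant. -/
theorem energy_conserved_semidiscrete {N : ℕ}
    (Dα Dβ : Matrix (Fin N) (Fin N) ℝ)
    (hDα : Dα.transpose = Dα) (hDβ : Dβ.transpose = Dβ)
    (U V P Q : ℝ → Fin N → ℝ)
    (hU : ∀ t, HasDerivAt U ((2 : ℝ) • V t) t)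
    (hV : ∀ t, HasDerivAt V
      ((1/2 : ℝ) • (Dβ.mulVec (U t) - U t +
        (fun i => P t i * P t i) + fun i => Q t i * Q t i)) t)
    (hP : ∀ t, HasDerivAt P
      ((1/2 : ℝ) • Dα.mulVec (Q t) + fun i => U t i * Q t i) t)
    (hQ : ∀ t, HasDerivAt Q
      (-((1/2 : ℝ) • Dα.mulVec (P t)) - fun i => U t i * P t i) t) :
    ∀ t s : ℝ,
      (1/4 : ℝ) * (-(dotProduct (P t) (Dα.mulVec (P t)))
        - dotProduct (Q t) (Dα.mulVec (Q t))
        - dotProduct (U t) (Dβ.mulVec (U t))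
        + dotProduct (U t) (U t)
        + 4 * dotProduct (V t) (V t)
        - 2 * dotProduct (U t)
            ((fun i => P t i * P t i) + fun i => Q t i * Q t i)) =
      (1/4 : ℝ) * (-(dotProduct (P s) (Dα.mulVec (P s)))
        - dotProduct (Q s) (Dα.mulVec (Q s))
        - dotProduct (U s) (Dβ.mulVec (U s))
        + dotProduct (U s) (U s)
        + 4 * dotProduct (V s) (V s)
        - 2 * dotProduct (U s)
            ((fun i => P s i * P s i) + fun i => Q s i * Q s i)) := by
  have key : ∀ r : ℝ, HasDerivAt (fun τ =>
      (1/4 : ℝ) * (-(dotProduct (P τ) (Dα.mulVec (P τ)))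
        - dotProduct (Q τ) (Dα.mulVec (Q τ))
        - dotProduct (U τ) (Dβ.mulVec (U τ))
        + dotProduct (U τ) (U τ)
        + 4 * dotProduct (V τ) (V τ)
        - 2 * dotProduct (U τ)
            ((fun i => P τ i * P τ i) + fun i => Q τ i * Q τ i))) 0 r := by
    intro r
    have hu := hU r
    have hv := hV r
    have hp := hP r
    have hq := hQ r
    set u := U r with hu_def
    set v := V r with hv_def
    set p := P r with hp_def
    set q := Q r with hq_def
    set U' : Fin N → ℝ := (2 : ℝ) • v with hU'_def
    set V' : Fin N → ℝ :=
      (1/2 : ℝ) • (Dβ.mulVec u - u + (fun i => p i * p i) + fun i => q i * q i) with hV'_def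
    set P' : Fin N → ℝ := (1/2 : ℝ) • Dα.mulVec q + fun i => u i * q i with hP'_def
    set Q' : Fin N → ℝ := -((1/2 : ℝ) • Dα.mulVec p) - fun i => u i * p i with hQ'_def
    have d1 : HasDerivAt (fun τ => dotProduct (P τ) (Dα.mulVec (P τ)))
        (dotProduct P' (Dα.mulVec p) + dotProduct p (Dα.mulVec P')) r :=
      aux_dotDeriv hp (aux_mulVecDeriv Dα hp)
    have d2 : HasDerivAt (fun τ => dotProduct (Q τ) (Dα.mulVec (Q τ)))
        (dotProduct Q' (Dα.mulVec q) + dotProduct q (Dα.mulVec Q')) r :=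
      aux_dotDeriv hq (aux_mulVecDeriv Dα hq)
    have d3 : HasDerivAt (fun τ => dotProduct (U τ) (Dβ.mulVec (U τ)))
        (dotProduct U' (Dβ.mulVec u) + dotProduct u (Dβ.mulVec U')) r :=
      aux_dotDeriv hu (aux_mulVecDeriv Dβ hu)
    have d4 : HasDerivAt (fun τ => dotProduct (U τ) (U τ))
        (dotProduct U' u + dotProduct u U') r := aux_dotDeriv hu hu
    have d5 : HasDerivAt (fun τ => dotProduct (V τ) (V τ))
        (dotProduct V' v + dotProduct v V') r := aux_dotDeriv hv hv
    have dpp : HasDerivAt (fun τ => fun i => P τ i * P τ i)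
        (fun i => P' i * p i + p i * P' i) r := aux_hadDeriv hp hp
    have dqq : HasDerivAt (fun τ => fun i => Q τ i * Q τ i)
        (fun i => Q' i * q i + q i * Q' i) r := aux_hadDeriv hq hq
    have d6 : HasDerivAt (fun τ => dotProduct (U τ)
          ((fun i => P τ i * P τ i) + fun i => Q τ i * Q τ i))
        (dotProduct U' ((fun i => p i * p i) + fun i => q i * q i)
          + dotProduct u ((fun i => P' i * p i + p i * P' i)
            + fun i => Q' i * q i + q i * Q' i)) r :=
      aux_dotDeriv hu (dpp.add dqq)
    have Hd : HasDerivAt (fun τ =>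
        (1/4 : ℝ) * (-(dotProduct (P τ) (Dα.mulVec (P τ)))
          - dotProduct (Q τ) (Dα.mulVec (Q τ))
          - dotProduct (U τ) (Dβ.mulVec (U τ))
          + dotProduct (U τ) (U τ)
          + 4 * dotProduct (V τ) (V τ)
          - 2 * dotProduct (U τ)
              ((fun i => P τ i * P τ i) + fun i => Q τ i * Q τ i)))
        ((1/4 : ℝ) * (-(dotProduct P' (Dα.mulVec p) + dotProduct p (Dα.mulVec P'))
          - (dotProduct Q' (Dα.mulVec q) + dotProduct q (Dα.mulVec Q'))
          - (dotProduct U' (Dβ.mulVec u) + dotProduct u (Dβ.mulVec U'))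
          + (dotProduct U' u + dotProduct u U')
          + 4 * (dotProduct V' v + dotProduct v V')
          - 2 * (dotProduct U' ((fun i => p i * p i) + fun i => q i * q i)
            + dotProduct u ((fun i => P' i * p i + p i * P' i)
              + fun i => Q' i * q i + q i * Q' i)))) r :=
      (((((d1.neg.sub d2).sub d3).add d4).add (d5.const_mul 4)).sub
        (d6.const_mul 2)).const_mul (1/4)
    have hzero : ((1/4 : ℝ) * (-(dotProduct P' (Dα.mulVec p) + dotProduct p (Dα.mulVec P'))
          - (dotProduct Q' (Dα.mulVec q) + dotProduct q (Dα.mulVec Q'))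
          - (dotProduct U' (Dβ.mulVec u) + dotProduct u (Dβ.mulVec U'))
          + (dotProduct U' u + dotProduct u U')
          + 4 * (dotProduct V' v + dotProduct v V')
          - 2 * (dotProduct U' ((fun i => p i * p i) + fun i => q i * q i)
            + dotProduct u ((fun i => P' i * p i + p i * P' i)
              + fun i => Q' i * q i + q i * Q' i)))) = 0 := by
      rw [aux_symmSwap hDα p P', aux_symmSwap hDα q Q', aux_symmSwap hDβ u U',
        hU'_def, hV'_def, hP'_def, hQ'_def]
      simp only [dotProduct, Pi.add_apply, Pi.sub_apply, Pi.neg_apply,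
        Pi.smul_apply, smul_eq_mul]
      simp only [Finset.mul_sum, ← Finset.sum_add_distrib, ← Finset.sum_sub_distrib,
        ← Finset.sum_neg_distrib]
      exact Finset.sum_eq_zero fun i _ => by ring
    exact hzero ▸ Hd
  intro t s
  exact is_const_of_deriv_eq_zero (fun r => (key r).differentiableAt)
    (fun r => (key r).deriv) t s
end

section
/- Suppose P^{m+1}, P^m, Q^{m+1}, Q^m, U ∈ R^N, D is a real symmetric N×N matrix, τ > 0, and the vectors satisfy (P^{m+1} - P^m)/τ = (1/2) D Q̄ + U·Q̄ and (Q^{m+1} - Q^m)/τ = -(1/2) D P̄ - U·P̄, where P̄ = (P^{m+1} + P^m)/2, Q̄ = (Q^{m+1} + Q^m)/2, and · denotes entrywise multiplication. Then ‖P^{m+1}‖² + ‖Q^{m+1}‖² = ‖P^m‖² + ‖Q^m‖². -/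
/-- Discrete mass conservation for the FPAVF scheme: if
`(Pᵐ⁺¹ - Pᵐ)/τ = (1/2) D Q̄ + U·Q̄` and `(Qᵐ⁺¹ - Qᵐ)/τ = -(1/2) D P̄ - U·P̄`
with `P̄, Q̄` the midpoint averages, `D` symmetric and `τ > 0`, then
`‖Pᵐ⁺¹‖² + ‖Qᵐ⁺¹‖² = ‖Pᵐ‖² + ‖Qᵐ‖²`. -/
theorem discrete_mass_conservation_FPAVF {N : ℕ}
    (D : Matrix (Fin N) (Fin N) ℝ) (hD : D.transpose = D)
    (τ : ℝ) (hτ : 0 < τ)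
    (P0 P1 Q0 Q1 U : EuclideanSpace ℝ (Fin N))
    (hP : (1/τ) • (P1 - P0) =
      (WithLp.toLp 2 ((1/2 : ℝ) • D.mulVec ((1/2 : ℝ) • (Q1 + Q0)) +
        fun i => U i * ((1/2 : ℝ) • (Q1 + Q0)) i : Fin N → ℝ) :
          EuclideanSpace ℝ (Fin N)))
    (hQ : (1/τ) • (Q1 - Q0) =
      (WithLp.toLp 2 (-((1/2 : ℝ) • D.mulVec ((1/2 : ℝ) • (P1 + P0))) -
        fun i => U i * ((1/2 : ℝ) • (P1 + P0)) i : Fin N → ℝ) :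
          EuclideanSpace ℝ (Fin N))) :
    ‖P1‖ ^ 2 + ‖Q1‖ ^ 2 = ‖P0‖ ^ 2 + ‖Q0‖ ^ 2 := by
  classical
  have hτ' : τ ≠ 0 := ne_of_gt hτ
  set p : Fin N → ℝ := (1/2 : ℝ) • (P1 + P0) with hp
  set q : Fin N → ℝ := (1/2 : ℝ) • (Q1 + Q0) with hq
  have hDij : ∀ i j, D i j = D j i := by
    intro i j
    conv_lhs => rw [← hD]
    rfl
  have hPi : ∀ i, P1 i - P0 i = τ * ((1/2) * D.mulVec q i + U i * q i) := by
    intro i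
    have h := congrArg (fun x => x i) hP
    simp only [PiLp.smul_apply, PiLp.sub_apply, PiLp.add_apply, PiLp.toLp_apply, smul_eq_mul,
      Pi.add_apply, Pi.smul_apply, WithLp.ofLp_add, WithLp.ofLp_smul] at h
    field_simp at h
    have hqi : q i = (Q1 i + Q0 i) / 2 := by
      simp only [hq, Pi.smul_apply, Pi.add_apply, smul_eq_mul]; ring
    rw [hqi]
    linarith [h]
  have hQi : ∀ i, Q1 i - Q0 i = τ * (-((1/2) * D.mulVec p i) - U i * p i) := by
    intro i
    have h := congrArg (fun x => x i) hQ
    simp only [PiLp.smul_apply, PiLp.sub_apply, PiLp.neg_apply, PiLp.toLp_apply, smul_eq_mul,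
      Pi.sub_apply, Pi.neg_apply, Pi.add_apply, Pi.smul_apply, WithLp.ofLp_add, WithLp.ofLp_smul] at h
    field_simp at h
    have hpi : p i = (P1 i + P0 i) / 2 := by
      simp only [hp, Pi.smul_apply, Pi.add_apply, smul_eq_mul]; ring
    rw [hpi]
    linarith [h]
  have hsym : ∑ i, D.mulVec q i * p i = ∑ i, D.mulVec p i * q i := by
    simp only [Matrix.mulVec, dotProduct, Finset.sum_mul]
    rw [Finset.sum_comm]
    refine Finset.sum_congr rfl fun j _ => Finset.sum_congr rfl fun i _ => ?_
    rw [hDij]; ring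
  have hpq : ∀ i, P1 i + P0 i = 2 * p i := by
    intro i; simp [hp, PiLp.smul_apply, PiLp.add_apply]; ring
  have hqq : ∀ i, Q1 i + Q0 i = 2 * q i := by
    intro i; simp [hq, PiLp.smul_apply, PiLp.add_apply]; ring
  have key : ∑ i, (P1 i ^ 2 + Q1 i ^ 2) = ∑ i, (P0 i ^ 2 + Q0 i ^ 2) := by
    have expand : ∀ i, P1 i ^ 2 + Q1 i ^ 2 - (P0 i ^ 2 + Q0 i ^ 2)
        = τ * (D.mulVec q i * p i - D.mulVec p i * q i)
          + τ * 2 * (U i * q i * p i - U i * p i * q i) := by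
      intro i
      have h1 := hPi i
      have h2 := hQi i
      have e1 : P1 i ^ 2 - P0 i ^ 2 = (P1 i - P0 i) * (P1 i + P0 i) := by ring
      have e2 : Q1 i ^ 2 - Q0 i ^ 2 = (Q1 i - Q0 i) * (Q1 i + Q0 i) := by ring
      rw [hpq i] at e1
      rw [hqq i] at e2
      linear_combination e1 + e2 + 2 * p i * h1 + 2 * q i * h2
    have : ∑ i, (P1 i ^ 2 + Q1 i ^ 2) - ∑ i, (P0 i ^ 2 + Q0 i ^ 2) = 0 := by
      rw [← Finset.sum_sub_distrib]
      calc ∑ i, (P1 i ^ 2 + Q1 i ^ 2 - (P0 i ^ 2 + Q0 i ^ 2))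
          = ∑ i, (τ * (D.mulVec q i * p i - D.mulVec p i * q i)
            + τ * 2 * (U i * q i * p i - U i * p i * q i)) :=
            Finset.sum_congr rfl fun i _ => expand i
        _ = τ * (∑ i, D.mulVec q i * p i - ∑ i, D.mulVec p i * q i)
            + τ * 2 * ∑ i, (U i * q i * p i - U i * p i * q i) := by
            rw [Finset.sum_add_distrib, ← Finset.mul_sum, ← Finset.mul_sum,
              Finset.sum_sub_distrib]
        _ = 0 := by
            rw [hsym]
            have : ∑ i, (U i * q i * p i - U i * p i * q i) = 0 := by
              apply Finset.sum_eq_zero; intro i _; ring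
            rw [this]; ring
    linarith [this]
  have nsq : ∀ x : EuclideanSpace ℝ (Fin N), ‖x‖ ^ 2 = ∑ i, x i ^ 2 := by
    intro x
    rw [EuclideanSpace.norm_eq, Real.sq_sqrt (by positivity)]
    simp [Real.norm_eq_abs, sq_abs]
  rw [nsq, nsq, nsq, nsq, ← Finset.sum_add_distrib, ← Finset.sum_add_distrib]
  exact key
end

section
/- Let D^α, D^β be real symmetric N×N matrices, τ > 0, and suppose U^{m+1}, U^m, V^{m+1}, V^m, P^{m+1}, P^m, Q^{m+1}, Q^m ∈ R^N satisfy the FPAVF scheme: (U^{m+1}-U^m)/τ = V^{m+1}+V^m, (V^{m+1}-V^m)/τ = (1/2)(D^β Ū - Ū) + (1/2)(P^m·P^m + Q^m·Q^m), (P^{m+1}-P^m)/τ = (1/2)D^α Q̄ + U^{m+1}·Q̄, (Q^{m+1}-Q^m)/τ = -(1/2)D^α P̄ - U^{m+1}·P̄, where X̄ = (X^{m+1}+X^m)/2. Then the discrete energy H^m = (1/4)( -(P^m)^T D^α P^m - (Q^m)^T D^α Q^m - (U^m)^T D^β U^m + (U^m)^T U^m + 4(V^m)^T V^m - 2(U^m)^T(P^m·P^m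 + Q^m·Q^m) ) satisfies H^{m+1} = H^m. -/
/-- For a symmetric matrix, the difference of quadratic forms factors. -/
lemma sym_diff_aux {N : ℕ} (M : Matrix (Fin N) (Fin N) ℝ) (hM : M.transpose = M)
    (x y : Fin N → ℝ) :
    dotProduct x (M.mulVec x) - dotProduct y (M.mulVec y)
      = dotProduct (x - y) (M.mulVec (x + y)) := by
  have hsym : dotProduct x (M.mulVec y) = dotProduct y (M.mulVec x) := by
    rw [Matrix.dotProduct_mulVec, ← Matrix.mulVec_transpose, hM, dotProduct_comm]
  rw [Matrix.mulVec_add, dotProduct_add, sub_dotProduct, sub_dotProduct]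
  linarith

/-- Discrete energy conservation for the FPAVF scheme: under
`(Uᵐ⁺¹-Uᵐ)/τ = Vᵐ⁺¹+Vᵐ`, `(Vᵐ⁺¹-Vᵐ)/τ = (1/2)(DᵝŪ - Ū) + (1/2)(Pᵐ·Pᵐ + Qᵐ·Qᵐ)`,
`(Pᵐ⁺¹-Pᵐ)/τ = (1/2)DᵅQ̄ + Uᵐ⁺¹·Q̄`, `(Qᵐ⁺¹-Qᵐ)/τ = -(1/2)DᵅP̄ - Uᵐ⁺¹·P̄`,
the discrete energy `Hᵐ` satisfies `Hᵐ⁺¹ = Hᵐ`. -/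
theorem discrete_energy_conservation_FPAVF {N : ℕ}
    (Dα Dβ : Matrix (Fin N) (Fin N) ℝ)
    (hDα : Dα.transpose = Dα) (hDβ : Dβ.transpose = Dβ)
    (τ : ℝ) (hτ : 0 < τ)
    (U0 U1 V0 V1 P0 P1 Q0 Q1 : Fin N → ℝ)
    (hU : (1/τ) • (U1 - U0) = V1 + V0)
    (hV : (1/τ) • (V1 - V0) =
      (1/2 : ℝ) • (Dβ.mulVec ((1/2 : ℝ) • (U1 + U0)) - (1/2 : ℝ) • (U1 + U0)) +
      (1/2 : ℝ) • ((fun i => P0 i * P0 i) + fun i => Q0 i * Q0 i))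
    (hP : (1/τ) • (P1 - P0) =
      (1/2 : ℝ) • Dα.mulVec ((1/2 : ℝ) • (Q1 + Q0)) +
      fun i => U1 i * ((1/2 : ℝ) • (Q1 + Q0)) i)
    (hQ : (1/τ) • (Q1 - Q0) =
      -((1/2 : ℝ) • Dα.mulVec ((1/2 : ℝ) • (P1 + P0))) -
      fun i => U1 i * ((1/2 : ℝ) • (P1 + P0)) i) :
    (1/4 : ℝ) * (-(dotProduct P1 (Dα.mulVec P1))
      - dotProduct Q1 (Dα.mulVec Q1)
      - dotProduct U1 (Dβ.mulVec U1)
      + dotProduct U1 U1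
      + 4 * dotProduct V1 V1
      - 2 * dotProduct U1 ((fun i => P1 i * P1 i) + fun i => Q1 i * Q1 i)) =
    (1/4 : ℝ) * (-(dotProduct P0 (Dα.mulVec P0))
      - dotProduct Q0 (Dα.mulVec Q0)
      - dotProduct U0 (Dβ.mulVec U0)
      + dotProduct U0 U0
      + 4 * dotProduct V0 V0
      - 2 * dotProduct U0 ((fun i => P0 i * P0 i) + fun i => Q0 i * Q0 i)) := by
  have hτ' : τ ≠ 0 := ne_of_gt hτ
  -- Multiply the scheme equations by τ
  have hU' : U1 - U0 = τ • (V1 + V0) := by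
    rw [← hU, smul_smul, mul_one_div, div_self hτ', one_smul]
  have hV' : V1 - V0 = τ • ((1/2 : ℝ) • (Dβ.mulVec ((1/2 : ℝ) • (U1 + U0)) - (1/2 : ℝ) • (U1 + U0)) +
      (1/2 : ℝ) • ((fun i => P0 i * P0 i) + fun i => Q0 i * Q0 i)) := by
    rw [← hV, smul_smul, mul_one_div, div_self hτ', one_smul]
  have hP' : P1 - P0 = τ • ((1/2 : ℝ) • Dα.mulVec ((1/2 : ℝ) • (Q1 + Q0)) +
      fun i => U1 i * ((1/2 : ℝ) • (Q1 + Q0)) i) := by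
    rw [← hP, smul_smul, mul_one_div, div_self hτ', one_smul]
  have hQ' : Q1 - Q0 = τ • (-((1/2 : ℝ) • Dα.mulVec ((1/2 : ℝ) • (P1 + P0))) -
      fun i => U1 i * ((1/2 : ℝ) • (P1 + P0)) i) := by
    rw [← hQ, smul_smul, mul_one_div, div_self hτ', one_smul]
  simp only [Matrix.mulVec_smul] at hV' hP' hQ'
  -- pointwise versions
  have h1 : ∀ i, U1 i - U0 i = τ * (V1 i + V0 i) := by
    intro i
    have := congrFun hU' i
    simpa using this
  have h2 : ∀ i, V1 i - V0 i = τ * ((1/2 : ℝ) * ((1/2 : ℝ) * (Dβ.mulVec (U1 + U0)) i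
      - (1/2 : ℝ) * (U1 i + U0 i)) + (1/2 : ℝ) * (P0 i * P0 i + Q0 i * Q0 i)) := by
    intro i
    have := congrFun hV' i
    simp only [Pi.smul_apply, Pi.add_apply, Pi.sub_apply, Pi.neg_apply, smul_eq_mul] at this
    linear_combination this
  have h3 : ∀ i, P1 i - P0 i = τ * ((1/2 : ℝ) * ((1/2 : ℝ) * (Dα.mulVec (Q1 + Q0)) i)
      + U1 i * ((1/2 : ℝ) * (Q1 i + Q0 i))) := by
    intro i
    have := congrFun hP' i
    simp only [Pi.smul_apply, Pi.add_apply, Pi.sub_apply, Pi.neg_apply, smul_eq_mul] at this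
    linear_combination this
  have h4 : ∀ i, Q1 i - Q0 i = τ * (-((1/2 : ℝ) * ((1/2 : ℝ) * (Dα.mulVec (P1 + P0)) i))
      - U1 i * ((1/2 : ℝ) * (P1 i + P0 i))) := by
    intro i
    have := congrFun hQ' i
    simp only [Pi.smul_apply, Pi.add_apply, Pi.sub_apply, Pi.neg_apply, smul_eq_mul] at this
    linear_combination this
  -- symmetric factorizations
  have e1 := sym_diff_aux Dα hDα P1 P0
  have e2 := sym_diff_aux Dα hDα Q1 Q0
  have e3 := sym_diff_aux Dβ hDβ U1 U0
  -- the key vanishing combination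
  have hsum : -(dotProduct (P1 - P0) (Dα.mulVec (P1 + P0)))
      - dotProduct (Q1 - Q0) (Dα.mulVec (Q1 + Q0))
      - dotProduct (U1 - U0) (Dβ.mulVec (U1 + U0))
      + (dotProduct U1 U1 - dotProduct U0 U0)
      + 4 * (dotProduct V1 V1 - dotProduct V0 V0)
      - 2 * (dotProduct U1 ((fun i => P1 i * P1 i) + fun i => Q1 i * Q1 i)
          - dotProduct U0 ((fun i => P0 i * P0 i) + fun i => Q0 i * Q0 i)) = 0 := by
    simp only [dotProduct, Pi.sub_apply, Pi.add_apply, Finset.mul_sum,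
      ← Finset.sum_neg_distrib, ← Finset.sum_sub_distrib, ← Finset.sum_add_distrib]
    apply Finset.sum_eq_zero
    intro i _
    linear_combination
      (-(Dβ.mulVec (U1 + U0)) i + U1 i + U0 i - 2 * (P0 i * P0 i + Q0 i * Q0 i)) * h1 i
      + (4 * (V1 i + V0 i)) * h2 i
      + (-(Dα.mulVec (P1 + P0)) i - 2 * U1 i * (P1 i + P0 i)) * h3 i
      + (-(Dα.mulVec (Q1 + Q0)) i - 2 * U1 i * (Q1 i + Q0 i)) * h4 i
  linarith [e1, e2, e3, hsum]
end

section
/- Let D^α, D^β be real symmetric N×N matrices, τ > 0, and suppose U^{m+1}, U^m, V^{m+1}, V^m, P^{m+1}, P^m, Q^{m+1}, Q^m ∈ R^N satisfy the FPAVF-P scheme: (U^{m+1}-U^m)/τ = (V^{m+1}+V^m)/2, (V^{m+1}-V^m)/τ = (1/2)(D^β Ū - Ū) + (1/4)(P^m·P^m + Q^m·Q^m + P^{m+1}·P^{m+1} + Q^{m+1}·Q^{m+1}), (P^{m+1}-P^m)/τ = (1/2)D^α Q̄ + Ū·Q̄, (Q^{m+1}-Q^m)/τ = -(1/2)D^α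 P̄ - Ū·P̄, where X̄ = (X^{m+1}+X^m)/2. Then ‖P^{m+1}‖² + ‖Q^{m+1}‖² = ‖P^m‖² + ‖Q^m‖². -/
/-- Discrete mass conservation for the FPAVF-P scheme:
`(Uᵐ⁺¹-Uᵐ)/τ = (Vᵐ⁺¹+Vᵐ)/2`,
`(Vᵐ⁺¹-Vᵐ)/τ = (1/2)(DᵝŪ - Ū) + (1/4)(Pᵐ·Pᵐ + Qᵐ·Qᵐ + Pᵐ⁺¹·Pᵐ⁺¹ + Qᵐ⁺¹·Qᵐ⁺¹)`,
`(Pᵐ⁺¹-Pᵐ)/τ = (1/2)DᵅQ̄ + Ū·Q̄`, `(Qᵐ⁺¹-Qᵐ)/τ = -(1/2)DᵅP̄ - Ū·P̄`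
imply `‖Pᵐ⁺¹‖² + ‖Qᵐ⁺¹‖² = ‖Pᵐ‖² + ‖Qᵐ‖²`. -/
theorem discrete_mass_conservation_FPAVF_P {N : ℕ}
    (Dα Dβ : Matrix (Fin N) (Fin N) ℝ)
    (hDα : Dα.transpose = Dα) (hDβ : Dβ.transpose = Dβ)
    (τ : ℝ) (hτ : 0 < τ)
    (U0 U1 V0 V1 : Fin N → ℝ)
    (P0 P1 Q0 Q1 : EuclideanSpace ℝ (Fin N))
    (hU : (1/τ) • (U1 - U0) = (1/2 : ℝ) • (V1 + V0))
    (hV : (1/τ) • (V1 - V0) =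
      (1/2 : ℝ) • (Dβ.mulVec ((1/2 : ℝ) • (U1 + U0)) - (1/2 : ℝ) • (U1 + U0)) +
      (1/4 : ℝ) • ((fun i => P0 i * P0 i) + (fun i => Q0 i * Q0 i) +
        (fun i => P1 i * P1 i) + fun i => Q1 i * Q1 i))
    (hP : (1/τ) • (P1 - P0) =
      (WithLp.toLp 2 ((1/2 : ℝ) • Dα.mulVec ((1/2 : ℝ) • (Q1 + Q0)) +
        fun i => ((1/2 : ℝ) • (U1 + U0)) i * ((1/2 : ℝ) • (Q1 + Q0)) i : Fin N → ℝ) :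
          EuclideanSpace ℝ (Fin N)))
    (hQ : (1/τ) • (Q1 - Q0) =
      (WithLp.toLp 2 (-((1/2 : ℝ) • Dα.mulVec ((1/2 : ℝ) • (P1 + P0))) -
        fun i => ((1/2 : ℝ) • (U1 + U0)) i * ((1/2 : ℝ) • (P1 + P0)) i : Fin N → ℝ) :
          EuclideanSpace ℝ (Fin N))) :
    ‖P1‖ ^ 2 + ‖Q1‖ ^ 2 = ‖P0‖ ^ 2 + ‖Q0‖ ^ 2 := by
  have hτ' : τ ≠ 0 := ne_of_gt hτ
  set Aq := Dα.mulVec ((1/2 : ℝ) • (Q1 + Q0)) with hAq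
  set Ap := Dα.mulVec ((1/2 : ℝ) • (P1 + P0)) with hAp
  -- coordinate forms
  have hPi : ∀ i, P1 i - P0 i =
      τ * ((1/2) * Aq i + ((1/2) * (U1 i + U0 i)) * ((1/2) * (Q1 i + Q0 i))) := by
    intro i
    have h := congrArg (fun v : EuclideanSpace ℝ (Fin N) => v i) hP
    simp only [PiLp.smul_apply, PiLp.sub_apply, PiLp.add_apply, PiLp.toLp_apply, Pi.smul_apply, Pi.sub_apply, Pi.add_apply, smul_eq_mul] at h
    field_simp at h ⊢
    linarith
  have hQi : ∀ i, Q1 i - Q0 i =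
      τ * (-((1/2) * Ap i) - ((1/2) * (U1 i + U0 i)) * ((1/2) * (P1 i + P0 i))) := by
    intro i
    have h := congrArg (fun v : EuclideanSpace ℝ (Fin N) => v i) hQ
    simp only [PiLp.smul_apply, PiLp.sub_apply, PiLp.add_apply, PiLp.toLp_apply, Pi.smul_apply, Pi.sub_apply, Pi.add_apply, Pi.neg_apply, smul_eq_mul] at h
    field_simp at h ⊢
    linarith
  -- symmetry
  have hsym : ∑ i, ((1/2 : ℝ) * (P1 i + P0 i)) * Aq i
      = ∑ i, ((1/2 : ℝ) * (Q1 i + Q0 i)) * Ap i := by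
    have h1 : dotProduct (fun i => (1/2 : ℝ) * (P1 i + P0 i)) Aq
        = dotProduct (Dα.vecMul (fun i => (1/2 : ℝ) * (P1 i + P0 i))) ((1/2 : ℝ) • (Q1 + Q0)) := by
      rw [hAq, Matrix.dotProduct_mulVec]
    have h2 : Dα.vecMul (fun i => (1/2 : ℝ) * (P1 i + P0 i))
        = Dα.mulVec (fun i => (1/2 : ℝ) * (P1 i + P0 i)) := by
      rw [← hDα, Matrix.vecMul_transpose, hDα]
    have h3 : (fun i => (1/2 : ℝ) * (P1 i + P0 i)) = ((1/2 : ℝ) • (P1 + P0) : Fin N → ℝ) := by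
      funext i; simp [smul_eq_mul]
    calc ∑ i, ((1/2 : ℝ) * (P1 i + P0 i)) * Aq i
        = dotProduct (fun i => (1/2 : ℝ) * (P1 i + P0 i)) Aq := by
          simp [dotProduct]
      _ = dotProduct (Dα.mulVec (fun i => (1/2 : ℝ) * (P1 i + P0 i))) ((1/2 : ℝ) • (Q1 + Q0)) := by
          rw [h1, h2]
      _ = dotProduct Ap ((1/2 : ℝ) • (Q1 + Q0)) := by rw [h3, hAp]
      _ = ∑ i, ((1/2 : ℝ) * (Q1 i + Q0 i)) * Ap i := by
          simp [dotProduct, smul_eq_mul, mul_comm]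
  -- sum identity
  have key : ∑ i, (P1 i ^ 2 + Q1 i ^ 2) = ∑ i, (P0 i ^ 2 + Q0 i ^ 2) := by
    have : ∑ i, ((P1 i ^ 2 + Q1 i ^ 2) - (P0 i ^ 2 + Q0 i ^ 2)) = 0 := by
      have heach : ∀ i, (P1 i ^ 2 + Q1 i ^ 2) - (P0 i ^ 2 + Q0 i ^ 2)
          = τ * (((1/2 : ℝ) * (P1 i + P0 i)) * Aq i - ((1/2 : ℝ) * (Q1 i + Q0 i)) * Ap i) := by
        intro i
        have h1 := hPi i
        have h2 := hQi i
        linear_combination (P1 i + P0 i) * h1 + (Q1 i + Q0 i) * h2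
      rw [Finset.sum_congr rfl (fun i _ => heach i), ← Finset.mul_sum,
        Finset.sum_sub_distrib, hsym]
      ring
    have := Finset.sum_sub_distrib (s := Finset.univ)
      (f := fun i => P1 i ^ 2 + Q1 i ^ 2) (g := fun i => P0 i ^ 2 + Q0 i ^ 2) ▸ this
    linarith [this]
  -- norms
  have hn : ∀ x : EuclideanSpace ℝ (Fin N), ‖x‖ ^ 2 = ∑ i, x i ^ 2 := by
    intro x
    rw [← real_inner_self_eq_norm_sq]
    simp only [PiLp.inner_apply, RCLike.inner_apply, conj_trivial, sq]
  rw [hn, hn, hn, hn]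
  rw [Finset.sum_add_distrib, Finset.sum_add_distrib] at key
  linarith [key]
end

section
/- Suppose P^{m+1}, P^m, Q^{m+1}, Q^m ∈ R^N, U ∈ R^N, D is a real symmetric N×N matrix, τ > 0, and (P^{m+1} - P^m)/τ = (1/2) D Q̄ + U·Q̄, (Q^{m+1} - Q^m)/τ = -(1/2) D P̄ - U·P̄ with P̄ = (P^{m+1}+P^m)/2, Q̄ = (Q^{m+1}+Q^m)/2. Then (P^{m+1})^T D P^{m+1} + (Q^{m+1})^T D Q^{m+1} + 2(P^{m+1})^T (U·P^{m+1}) + 2(Q^{m+1})^T (U·Q^{m+1}) = (P^m)^T D P^m + (Q^m)^T D Q^m + 2(P^m)^T(U·P^m) + 2(Q^m)^T(U·Q^m). -/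
private def Aop {N : ℕ} (D : Matrix (Fin N) (Fin N) ℝ) (U : Fin N → ℝ)
    (v : Fin N → ℝ) : Fin N → ℝ :=
  D.mulVec v + (2:ℝ) • fun i => U i * v i

private lemma Aop_sym {N : ℕ} (D : Matrix (Fin N) (Fin N) ℝ)
    (hD : D.transpose = D) (U x y : Fin N → ℝ) :
    dotProduct x (Aop D U y) = dotProduct y (Aop D U x) := by
  have hDsym : dotProduct x (D.mulVec y) = dotProduct y (D.mulVec x) := by
    rw [Matrix.dotProduct_mulVec, ← Matrix.mulVec_transpose, hD, dotProduct_comm]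
  have hUsym : dotProduct x (fun i => U i * y i)
      = dotProduct y (fun i => U i * x i) := by
    simp only [dotProduct]
    exact Finset.sum_congr rfl fun i _ => by ring
  simp only [Aop, dotProduct_add, dotProduct_smul, smul_eq_mul]
  rw [hDsym, hUsym]

private lemma Aop_add {N : ℕ} (D : Matrix (Fin N) (Fin N) ℝ) (U x y : Fin N → ℝ) :
    Aop D U (x + y) = Aop D U x + Aop D U y := by
  funext i
  simp [Aop, Matrix.mulVec_add]
  ring

private lemma Aop_smul {N : ℕ} (D : Matrix (Fin N) (Fin N) ℝ) (U : Fin N → ℝ)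
    (c : ℝ) (x : Fin N → ℝ) :
    Aop D U (c • x) = c • Aop D U x := by
  funext i
  simp [Aop, Matrix.mulVec_smul]
  ring

private lemma Aop_pol {N : ℕ} (D : Matrix (Fin N) (Fin N) ℝ)
    (hD : D.transpose = D) (U x y : Fin N → ℝ) :
    dotProduct x (Aop D U x) - dotProduct y (Aop D U y)
      = dotProduct (x - y) (Aop D U (x + y)) := by
  rw [Aop_add, sub_dotProduct, dotProduct_add, dotProduct_add,
    Aop_sym D hD U y x]
  ring

private lemma Aop_quad {N : ℕ} (D : Matrix (Fin N) (Fin N) ℝ) (U x : Fin N → ℝ) :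
    dotProduct x (Aop D U x)
      = dotProduct x (D.mulVec x)
        + 2 * dotProduct x (fun i => U i * x i) := by
  simp [Aop, dotProduct_add, dotProduct_smul]

private lemma Aop_key {N : ℕ} (D : Matrix (Fin N) (Fin N) ℝ)
    (hD : D.transpose = D) (τ : ℝ) (U P0 P1 Q0 Q1 Pb Qb : Fin N → ℝ)
    (hPb : P1 + P0 = (2:ℝ) • Pb) (hQb : Q1 + Q0 = (2:ℝ) • Qb)
    (hP1 : P1 - P0 = (τ/2) • Aop D U Qb)
    (hQ1 : Q1 - Q0 = -((τ/2) • Aop D U Pb)) :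
    dotProduct P1 (Aop D U P1) + dotProduct Q1 (Aop D U Q1)
      = dotProduct P0 (Aop D U P0) + dotProduct Q0 (Aop D U Q0) := by
  have h1 := Aop_pol D hD U P1 P0
  have h2 := Aop_pol D hD U Q1 Q0
  rw [hP1, hPb, Aop_smul, smul_dotProduct, dotProduct_smul] at h1
  rw [hQ1, hQb, Aop_smul, neg_dotProduct, smul_dotProduct,
    dotProduct_smul] at h2
  rw [dotProduct_comm (Aop D U Qb) (Aop D U Pb)] at h1
  simp only [smul_eq_mul] at h1 h2
  linarith

/-- The midpoint-type update with frozen `U` conserves the quadratic form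
`Pᵀ(D + 2 diag U)P + Qᵀ(D + 2 diag U)Q`. -/
theorem midpoint_update_conserves_quadratic_form {N : ℕ}
    (D : Matrix (Fin N) (Fin N) ℝ) (hD : D.transpose = D)
    (τ : ℝ) (hτ : 0 < τ)
    (P0 P1 Q0 Q1 U : Fin N → ℝ)
    (hP : (1/τ) • (P1 - P0) =
      (1/2 : ℝ) • D.mulVec ((1/2 : ℝ) • (Q1 + Q0)) +
      fun i => U i * ((1/2 : ℝ) • (Q1 + Q0)) i)
    (hQ : (1/τ) • (Q1 - Q0) =
      -((1/2 : ℝ) • D.mulVec ((1/2 : ℝ) • (P1 + P0))) -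
      fun i => U i * ((1/2 : ℝ) • (P1 + P0)) i) :
    dotProduct P1 (D.mulVec P1) + dotProduct Q1 (D.mulVec Q1)
      + 2 * dotProduct P1 (fun i => U i * P1 i)
      + 2 * dotProduct Q1 (fun i => U i * Q1 i) =
    dotProduct P0 (D.mulVec P0) + dotProduct Q0 (D.mulVec Q0)
      + 2 * dotProduct P0 (fun i => U i * P0 i)
      + 2 * dotProduct Q0 (fun i => U i * Q0 i) := by
  have hP1 : P1 - P0 = (τ/2) • Aop D U ((1/2 : ℝ) • (Q1 + Q0)) := by
    have h := congrArg (fun v : Fin N → ℝ => τ • v) hP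
    simp only [smul_smul, mul_one_div, div_self hτ.ne', one_smul] at h
    rw [h]
    funext i
    simp [Aop]
    ring
  have hQ1 : Q1 - Q0 = -((τ/2) • Aop D U ((1/2 : ℝ) • (P1 + P0))) := by
    have h := congrArg (fun v : Fin N → ℝ => τ • v) hQ
    simp only [smul_smul, mul_one_div, div_self hτ.ne', one_smul] at h
    rw [h]
    funext i
    simp [Aop]
    ring
  have hPsum : P1 + P0 = (2:ℝ) • ((1/2 : ℝ) • (P1 + P0)) := by
    funext i; simp; ring
  have hQsum : Q1 + Q0 = (2:ℝ) • ((1/2 : ℝ) • (Q1 + Q0)) := by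
    funext i; simp; ring
  have key := Aop_key D hD τ U P0 P1 Q0 Q1 _ _ hPsum hQsum hP1 hQ1
  have e1 := Aop_quad D U P1
  have e2 := Aop_quad D U Q1
  have e3 := Aop_quad D U P0
  have e4 := Aop_quad D U Q0
  linarith
end

section
/- Let H : R^d × R^d → R be continuously differentiable and let (y^{m+1}, z^{m+1}) be obtained from (y^m, z^m) by the PAVF method for the canonical Hamiltonian system with J = [[0, I],[-I, 0]]: (y^{m+1}-y^m)/τ = ∫₀¹ H_z(y^{m+1}, εz^{m+1}+(1-ε)z^m) dε and (z^{m+1}-z^m)/τ = -∫₀¹ H_y(εy^{m+1}+(1-ε)y^m, z^m) dε. Then H(y^{m+1}, z^{m+1}) = H(y^m, z^m). -/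
open MeasureTheory InnerProductSpace

lemma seg_integral {E : Type*} [NormedAddCommGroup E] [InnerProductSpace ℝ E]
    [CompleteSpace E]
    (g : E → ℝ) (G : E → E)
    (hg : ∀ x, HasGradientAt g (G x) x)
    (hGc : Continuous G) (a b : E) :
    g b - g a = ⟪∫ ε in (0:ℝ)..1, G (ε • b + (1 - ε) • a), b - a⟫_ℝ := by
  set γ : ℝ → E := fun ε => ε • b + (1 - ε) • a with hγdef
  have hγc : Continuous γ := by fun_prop
  have hγ : ∀ ε : ℝ, HasDerivAt γ (b - a) ε := by
    intro ε
    have h1 : HasDerivAt (fun ε : ℝ => ε • b) b ε := by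
      simpa using (hasDerivAt_id ε).smul_const b
    have h2 : HasDerivAt (fun ε : ℝ => (1 - ε) • a) (-a) ε := by
      simpa using ((hasDerivAt_const ε (1:ℝ)).sub (hasDerivAt_id ε)).smul_const a
    simpa [hγdef, sub_eq_add_neg] using h1.fun_add h2
  have hφ : ∀ ε : ℝ, HasDerivAt (fun ε => g (γ ε)) ⟪G (γ ε), b - a⟫_ℝ ε := by
    intro ε
    have := ((hg (γ ε)).hasFDerivAt).comp_hasDerivAt ε (hγ ε)
    simpa [toDual_apply_apply, Function.comp_def] using this
  have hcont : Continuous fun ε : ℝ => ⟪G (γ ε), b - a⟫_ℝ := by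
    exact (continuous_inner.comp (((hGc.comp hγc)).prodMk continuous_const))
  have hFTC : ∫ ε in (0:ℝ)..1, ⟪G (γ ε), b - a⟫_ℝ = g (γ 1) - g (γ 0) := by
    exact intervalIntegral.integral_eq_sub_of_hasDerivAt
      (fun t _ => hφ t) (hcont.intervalIntegrable 0 1)
  have hInt : IntervalIntegrable (fun ε => G (γ ε)) volume 0 1 :=
    (hGc.comp hγc).intervalIntegrable 0 1
  have hswap : ∫ ε in (0:ℝ)..1, ⟪G (γ ε), b - a⟫_ℝ
      = ⟪∫ ε in (0:ℝ)..1, G (γ ε), b - a⟫_ℝ := by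
    have := (innerSL ℝ (b - a)).intervalIntegral_comp_comm hInt
    simp only [innerSL_apply_apply] at this
    rw [real_inner_comm, ← this]
    exact intervalIntegral.integral_congr fun t _ => real_inner_comm _ _
  rw [← hswap, hFTC]
  simp [hγdef]

/-- Energy preservation of the PAVF method for canonical Hamiltonian systems:
if `(y¹ - y⁰)/τ = ∫₀¹ H_z(y¹, εz¹ + (1-ε)z⁰) dε` and
`(z¹ - z⁰)/τ = -∫₀¹ H_y(εy¹ + (1-ε)y⁰, z⁰) dε`, then `H(y¹, z¹) = H(y⁰, z⁰)`. -/
theorem PAVF_preserves_hamiltonian {d : ℕ}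
    (H : EuclideanSpace ℝ (Fin d) → EuclideanSpace ℝ (Fin d) → ℝ)
    (Hy Hz : EuclideanSpace ℝ (Fin d) → EuclideanSpace ℝ (Fin d) → EuclideanSpace ℝ (Fin d))
    (hHC1 : ContDiff ℝ 1 (fun p : EuclideanSpace ℝ (Fin d) × EuclideanSpace ℝ (Fin d) =>
      H p.1 p.2))
    (hHy : ∀ y z, HasGradientAt (fun y' => H y' z) (Hy y z) y)
    (hHz : ∀ y z, HasGradientAt (fun z' => H y z') (Hz y z) z)
    (τ : ℝ) (hτ : 0 < τ)
    (y0 y1 z0 z1 : EuclideanSpace ℝ (Fin d))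
    (hy : (1/τ) • (y1 - y0) = ∫ ε in (0:ℝ)..1, Hz y1 (ε • z1 + (1 - ε) • z0))
    (hz : (1/τ) • (z1 - z0) = -∫ ε in (0:ℝ)..1, Hy (ε • y1 + (1 - ε) • y0) z0) :
    H y1 z1 = H y0 z0 := by
  let E := EuclideanSpace ℝ (Fin d)
  set F : E × E → ℝ := fun p => H p.1 p.2 with hFdef
  have hFd : Differentiable ℝ F := hHC1.differentiable one_ne_zero
  have hfc : Continuous fun p : E × E => fderiv ℝ F p := hHC1.continuous_fderiv one_ne_zero
  set Lz : E →L[ℝ] E × E := (0 : E →L[ℝ] E).prod (ContinuousLinearMap.id ℝ E) with hLz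
  set Ly : E →L[ℝ] E × E := (ContinuousLinearMap.id ℝ E).prod (0 : E →L[ℝ] E) with hLy
  have hHzEq : ∀ y z : E, Hz y z = (toDual ℝ E).symm ((fderiv ℝ F (y, z)).comp Lz) := by
    intro y z
    have h1 : HasFDerivAt (fun z' => H y z') ((fderiv ℝ F (y, z)).comp Lz) z := by
      exact (hFd (y, z)).hasFDerivAt.comp z ((hasFDerivAt_const y z).prodMk (hasFDerivAt_id z))
    have h2 := (hHz y z).hasFDerivAt.unique h1
    apply (toDual ℝ E).injective
    simpa using h2
  have hHyEq : ∀ y z : E, Hy y z = (toDual ℝ E).symm ((fderiv ℝ F (y, z)).comp Ly) := by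
    intro y z
    have h1 : HasFDerivAt (fun y' => H y' z) ((fderiv ℝ F (y, z)).comp Ly) y := by
      exact (hFd (y, z)).hasFDerivAt.comp y ((hasFDerivAt_id (𝕜 := ℝ) y).prodMk (hasFDerivAt_const z y))
    have h2 := (hHy y z).hasFDerivAt.unique h1
    apply (toDual ℝ E).injective
    simpa using h2
  have hcompLz : Continuous fun A : (E × E) →L[ℝ] ℝ => A.comp Lz :=
    ((ContinuousLinearMap.compL ℝ E (E × E) ℝ).flip Lz).continuous
  have hcompLy : Continuous fun A : (E × E) →L[ℝ] ℝ => A.comp Ly :=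
    ((ContinuousLinearMap.compL ℝ E (E × E) ℝ).flip Ly).continuous
  have hGzc : Continuous fun z : E => Hz y1 z := by
    have : Continuous fun z : E => (toDual ℝ E).symm ((fderiv ℝ F (y1, z)).comp Lz) := by
      exact (toDual ℝ E).symm.continuous.comp
        (hcompLz.comp (hfc.comp (continuous_const.prodMk continuous_id)))
    simpa [← hHzEq] using this
  have hGyc : Continuous fun y : E => Hy y z0 := by
    have : Continuous fun y : E => (toDual ℝ E).symm ((fderiv ℝ F (y, z0)).comp Ly) := by
      exact (toDual ℝ E).symm.continuous.comp
        (hcompLy.comp (hfc.comp (continuous_id.prodMk continuous_const)))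
    simpa [← hHyEq] using this
  have e1 : H y1 z1 - H y1 z0
      = ⟪∫ ε in (0:ℝ)..1, Hz y1 (ε • z1 + (1 - ε) • z0), z1 - z0⟫_ℝ :=
    seg_integral (H y1) (Hz y1) (hHz y1) hGzc z0 z1
  have e2 : H y1 z0 - H y0 z0
      = ⟪∫ ε in (0:ℝ)..1, Hy (ε • y1 + (1 - ε) • y0) z0, y1 - y0⟫_ℝ :=
    seg_integral (fun y => H y z0) (fun y => Hy y z0) (fun y => hHy y z0) hGyc y0 y1
  rw [← hy] at e1
  have hz' : (∫ ε in (0:ℝ)..1, Hy (ε • y1 + (1 - ε) • y0) z0) = -((1/τ) • (z1 - z0)) := by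
    rw [hz]; simp
  rw [hz'] at e2
  have h3 : ⟪(1/τ) • (y1 - y0), z1 - z0⟫_ℝ = (1/τ) * ⟪y1 - y0, z1 - z0⟫_ℝ :=
    real_inner_smul_left _ _ _
  have h4 : ⟪-((1/τ) • (z1 - z0)), y1 - y0⟫_ℝ = -((1/τ) * ⟪z1 - z0, y1 - y0⟫_ℝ) := by
    rw [inner_neg_left, real_inner_smul_left]
  have h5 : ⟪y1 - y0, z1 - z0⟫_ℝ = ⟪z1 - z0, y1 - y0⟫_ℝ := real_inner_comm _ _
  rw [h3] at e1; rw [h4] at e2; rw [h5] at e1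
  linarith
end

section
/- Let f be a C¹ vector field on R^n of the form f(w) = S ∇H(w) with S skew-symmetric and H ∈ C². For the AVF update w^{m+1} defined implicitly by (w^{m+1} - w^m)/τ = S ∫₀¹ ∇H(ε w^{m+1} + (1-ε) w^m) dε, we have H(w^{m+1}) = H(w^m). -/
open MeasureTheory

/-- Energy preservation of the AVF method: for `f(w) = S ∇H(w)` with `S` skew-symmetric
and `H` of class `C²`, the AVF update
`(wᵐ⁺¹ - wᵐ)/τ = S ∫₀¹ ∇H(ε wᵐ⁺¹ + (1-ε) wᵐ) dε` satisfies `H(wᵐ⁺¹) = H(wᵐ)`. -/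
theorem AVF_preserves_hamiltonian {n : ℕ}
    (S : Matrix (Fin n) (Fin n) ℝ) (hS : S.transpose = -S)
    (H : EuclideanSpace ℝ (Fin n) → ℝ) (hH : ContDiff ℝ 2 H)
    (gradH : EuclideanSpace ℝ (Fin n) → EuclideanSpace ℝ (Fin n))
    (hgrad : ∀ w, HasGradientAt H (gradH w) w)
    (τ : ℝ) (hτ : 0 < τ)
    (w0 w1 : EuclideanSpace ℝ (Fin n))
    (hAVF : (1/τ) • (w1 - w0) =
      (WithLp.toLp 2 (S.mulVec (∫ ε in (0:ℝ)..1, gradH (ε • w1 + (1 - ε) • w0)) : Fin n → ℝ) :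
        EuclideanSpace ℝ (Fin n))) :
    H w1 = H w0 := by
  set γ : ℝ → EuclideanSpace ℝ (Fin n) := fun ε => ε • w1 + (1 - ε) • w0 with hγ
  -- continuity of gradH
  have hgc : Continuous gradH := by
    have h1 : ContDiff ℝ 1 (fderiv ℝ H) := hH.fderiv_right (by norm_num)
    have heq : gradH = fun w =>
        (InnerProductSpace.toDual ℝ (EuclideanSpace ℝ (Fin n))).symm (fderiv ℝ H w) := by
      funext w
      have := ((hgrad w).hasFDerivAt).fderiv
      rw [this, LinearIsometryEquiv.symm_apply_apply]
    rw [heq]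
    exact (InnerProductSpace.toDual ℝ _).symm.continuous.comp h1.continuous
  have hγc : Continuous γ := by fun_prop
  have hcont : Continuous (fun ε : ℝ => gradH (γ ε)) := hgc.comp hγc
  -- derivative of H ∘ γ
  have hderiv : ∀ ε : ℝ, HasDerivAt (fun t => H (γ t))
      (inner ℝ (gradH (γ ε)) (w1 - w0) : ℝ) ε := by
    intro ε
    have hγd : HasDerivAt γ (w1 - w0) ε := by
      have h1 : HasDerivAt (fun t : ℝ => t • w1) w1 ε := by
        simpa using (hasDerivAt_id ε).smul_const w1
      have h2 : HasDerivAt (fun t : ℝ => (1 - t) • w0) (-w0) ε := by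
        have : HasDerivAt (fun t : ℝ => (1 - t)) (-1) ε := by
          simpa using (hasDerivAt_id' ε).const_sub (1:ℝ)
        simpa using this.smul_const w0
      exact (h1.add h2).congr_deriv (sub_eq_add_neg _ _).symm
    have hF := (hgrad (γ ε)).hasFDerivAt
    have := hF.comp_hasDerivAt ε hγd
    have h := this; simp [InnerProductSpace.toDual_apply_apply, real_inner_comm] at h; exact h
  have hint : IntervalIntegrable (fun ε => (inner ℝ (gradH (γ ε)) (w1 - w0) : ℝ))
      volume 0 1 := (Continuous.intervalIntegrable (hcont.inner continuous_const) 0 1)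
  have hFTC : H w1 - H w0 = ∫ ε in (0:ℝ)..1, (inner ℝ (gradH (γ ε)) (w1 - w0) : ℝ) := by
    have := intervalIntegral.integral_eq_sub_of_hasDerivAt
      (fun ε _ => hderiv ε) hint
    rw [this]; simp [hγ]
  -- pull inner out
  set v : EuclideanSpace ℝ (Fin n) := ∫ ε in (0:ℝ)..1, gradH (γ ε) with hv
  have hintv : IntervalIntegrable (fun ε => gradH (γ ε)) volume 0 1 :=
    hcont.intervalIntegrable 0 1
  have hswap : (∫ ε in (0:ℝ)..1, (inner ℝ (gradH (γ ε)) (w1 - w0) : ℝ))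
      = inner ℝ v (w1 - w0) := by
    have h := ContinuousLinearMap.intervalIntegral_comp_comm ((innerSL ℝ).flip (w1 - w0))
      hintv (a := 0) (b := 1)
    simpa only [ContinuousLinearMap.flip_apply, innerSL_apply_apply, hv] using h
  -- w1 - w0 = τ • S v
  have hEuclPi : (∫ ε in (0:ℝ)..1, gradH (ε • w1 + (1 - ε) • w0) : Fin n → ℝ)
      = (v : Fin n → ℝ) := by
    have h := ContinuousLinearMap.intervalIntegral_comp_comm
      ((PiLp.continuousLinearEquiv 2 ℝ (fun _ : Fin n => ℝ)).toContinuousLinearMap)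
      hintv (a := 0) (b := 1)
    exact h
  have hstep : w1 - w0 = τ • (WithLp.toLp 2 (S.mulVec v : Fin n → ℝ) : EuclideanSpace ℝ (Fin n)) := by
    have h := congrArg (fun x => τ • x) hAVF
    simp only [smul_smul, mul_one_div, div_self hτ.ne', one_smul] at h
    rw [hEuclPi] at h
    exact h
  -- skew symmetry
  have hskew : (inner ℝ v (WithLp.toLp 2 (S.mulVec v : Fin n → ℝ) : EuclideanSpace ℝ (Fin n)) : ℝ) = 0 := by
    have h1 : (inner ℝ v (WithLp.toLp 2 (S.mulVec v : Fin n → ℝ) : EuclideanSpace ℝ (Fin n)) : ℝ)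
        = dotProduct (v : Fin n → ℝ) (S.mulVec v) := by
      simp [PiLp.inner_apply, dotProduct, mul_comm]
    rw [h1]
    have h2 : dotProduct (v : Fin n → ℝ) (S.mulVec v)
        = dotProduct (S.vecMul (v : Fin n → ℝ)) (v : Fin n → ℝ) :=
      (Matrix.dotProduct_mulVec _ _ _)
    have h3 : Matrix.vecMul (v : Fin n → ℝ) S = (S.transpose).mulVec v :=
      (Matrix.mulVec_transpose S v).symm
    rw [hS] at h3
    have h4 : dotProduct ((-S).mulVec (v : Fin n → ℝ)) (v : Fin n → ℝ)
        = - dotProduct (v : Fin n → ℝ) (S.mulVec v) := by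
      simp [Matrix.neg_mulVec, dotProduct_comm]
    have h5 : dotProduct (Matrix.vecMul (v : Fin n → ℝ) S) (v : Fin n → ℝ)
        = - dotProduct (v : Fin n → ℝ) (S.mulVec v) := by rw [h3]; exact h4
    linarith [h2, h5]
  have : H w1 - H w0 = 0 := by
    rw [hFTC, hswap, hstep]
    rw [real_inner_smul_right, hskew, mul_zero]
  linarith
end
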